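/- Let n ≥ 2 be an integer and let d₁, …, d_r be a nonempty finite list of integers, each d_i ≥ 2, whose least common multiple equals n. Then Σ_{i=1}^r φ(d_i) ≥ f(n) := (Σ_{p prime, p ∣ n} φ(p^{v_p(n)})) − ε(n). -/

import Mathlib

lemma sum_le_prod_of_two_le (s : Finset ℕ) (f : ℕ → ℕ) (h : ∀ i ∈ s, 2 ≤ f i)
    (hne : s.Nonempty) : (∑ i ∈ s, f i) ≤ ∏ i ∈ s, f i := by
  induction s using Finset.induction_on with
  | empty => exact absurd hne (by simp)
  | @insert a s ha ih =>
    have h2 : ∀ i ∈ s, 2 ≤ f i := fun i hi => h i (Finset.mem_insert_of_mem hi)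
    have hfa : 2 ≤ f a := h a (Finset.mem_insert_self a s)
    rw [Finset.sum_insert ha, Finset.prod_insert ha]
    rcases s.eq_empty_or_nonempty with rfl | hs
    · simp
    · have h2p : 2 ≤ ∏ i ∈ s, f i := by
        obtain ⟨j, hj⟩ := hs
        exact le_trans (h2 j hj)
          (Finset.single_le_prod' (fun i hi => le_trans one_le_two (h2 i hi)) hj)
      calc f a + ∑ i ∈ s, f i ≤ f a + ∏ i ∈ s, f i := by
              exact Nat.add_le_add_left (ih h2 hs) _
        _ ≤ f a * ∏ i ∈ s, f i := Nat.add_le_mul hfa h2p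

lemma totient_prod_pow (s : Finset ℕ) (hs : ∀ p ∈ s, p.Prime) (e : ℕ → ℕ) :
    (∏ p ∈ s, p ^ e p).totient = ∏ p ∈ s, (p ^ e p).totient := by
  induction s using Finset.induction_on with
  | empty => simp
  | @insert a s ha ih =>
    have hs' : ∀ p ∈ s, p.Prime := fun p hp => hs p (Finset.mem_insert_of_mem hp)
    rw [Finset.prod_insert ha, Finset.prod_insert ha, ← ih hs']
    refine Nat.totient_mul ?_
    refine Nat.Coprime.prod_right fun p hp => Nat.Coprime.pow _ _ ?_
    exact (Nat.coprime_primes (hs a (Finset.mem_insert_self a s)) (hs' p hp)).mpr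
      (fun h => ha (h ▸ hp))

lemma prod_pow_factorization_dvd (a : ℕ) (s : Finset ℕ) (hs : s ⊆ a.primeFactors) :
    (∏ p ∈ s, p ^ a.factorization p) ∣ a := by
  induction s using Finset.induction_on with
  | empty => simp
  | @insert q s hq ih =>
    have hsub : s ⊆ a.primeFactors := fun p hp => hs (Finset.mem_insert_of_mem hp)
    have hqp : q.Prime := Nat.prime_of_mem_primeFactors (hs (Finset.mem_insert_self q s))
    rw [Finset.prod_insert hq]
    refine Nat.Coprime.mul_dvd_of_dvd_of_dvd ?_ (Nat.ordProj_dvd a q) (ih hsub)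
    refine Nat.Coprime.prod_right fun p hp => Nat.Coprime.pow _ _ ?_
    exact (Nat.coprime_primes hqp (Nat.prime_of_mem_primeFactors (hsub hp))).mpr
      (fun h => hq (h ▸ hp))

lemma two_le_totient_prime_pow {p e : ℕ} (hp : p.Prime) (he : 1 ≤ e) (h : p ≠ 2 ∨ 2 ≤ e) :
    2 ≤ (p ^ e).totient := by
  rw [Nat.totient_prime_pow hp he]
  have hp2 := hp.two_le
  rcases h with h | h
  · have h3 : 2 ≤ p - 1 := by omega
    have h1 : 1 ≤ p ^ (e - 1) := Nat.one_le_pow _ _ hp.pos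
    calc 2 ≤ p - 1 := h3
      _ = 1 * (p - 1) := (one_mul _).symm
      _ ≤ p ^ (e - 1) * (p - 1) := Nat.mul_le_mul_right _ h1
  · have h1 : 2 ≤ p ^ (e - 1) := by
      calc 2 ≤ p := hp2
      _ = p ^ 1 := (pow_one p).symm
      _ ≤ p ^ (e-1) := Nat.pow_le_pow_right hp.pos (by omega)
    calc 2 = 2 * 1 := rfl
      _ ≤ p ^ (e - 1) * (p - 1) := Nat.mul_le_mul h1 (by omega)

/-- `ε(n) = 1` if `v₂(n) = 1` and `n ≠ 2`, and `ε(n) = 0` otherwise. -/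
def epsAux (n : ℕ) : ℕ := if n.factorization 2 = 1 ∧ n ≠ 2 then 1 else 0

/-- `f(n) = (Σ_{p prime, p ∣ n} φ(p^{v_p(n)})) − ε(n)`. -/
def fAux (n : ℕ) : ℕ := (∑ p ∈ n.primeFactors, (p ^ n.factorization p).totient) - epsAux n

lemma fAux_lcm_le (a m : ℕ) (ha : a ≠ 0) (hm : m ≠ 0) :
    fAux (Nat.lcm a m) ≤ a.totient + fAux m := by
  set n := Nat.lcm a m with hndef
  have hn0 : n ≠ 0 := Nat.lcm_ne_zero ha hm
  have hfac : ∀ p, n.factorization p = max (a.factorization p) (m.factorization p) := by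
    intro p
    rw [hndef, Nat.factorization_lcm ha hm]
    exact Finsupp.sup_apply (f := a.factorization) (g := m.factorization) p
  set S := n.primeFactors.filter (fun p => m.factorization p < a.factorization p) with hSdef
  set T := n.primeFactors.filter (fun p => ¬ m.factorization p < a.factorization p) with hTdef
  set A := ∑ p ∈ S, (p ^ a.factorization p).totient with hAdef
  set B := ∑ p ∈ T, (p ^ m.factorization p).totient with hBdef
  set P := ∏ p ∈ S, (p ^ a.factorization p).totient with hPdef
  set Fm := ∑ p ∈ m.primeFactors, (p ^ m.factorization p).totient with hFmdef
  have hφpos : 1 ≤ a.totient := Nat.totient_pos.mpr (Nat.pos_of_ne_zero ha)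
  have hsplit : ∑ p ∈ n.primeFactors, (p ^ n.factorization p).totient = A + B := by
    rw [hAdef, hBdef, hSdef, hTdef,
      ← Finset.sum_filter_add_sum_filter_not n.primeFactors
        (fun p => m.factorization p < a.factorization p)]
    congr 1
    · refine Finset.sum_congr rfl fun p hp => ?_
      have h := (Finset.mem_filter.mp hp).2
      rw [hfac p, max_eq_left (le_of_lt h)]
    · refine Finset.sum_congr rfl fun p hp => ?_
      have h := (Finset.mem_filter.mp hp).2
      rw [hfac p, max_eq_right (le_of_not_gt h)]
  have hSsub : S ⊆ a.primeFactors := by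
    intro p hp
    obtain ⟨hpn, hlt⟩ := Finset.mem_filter.mp hp
    exact Nat.mem_primeFactors.mpr ⟨Nat.prime_of_mem_primeFactors hpn,
      Nat.dvd_of_factorization_pos (by omega), ha⟩
  have hTsub : T ⊆ m.primeFactors := by
    intro p hp
    obtain ⟨hpn, hle⟩ := Finset.mem_filter.mp hp
    have hp' := Nat.prime_of_mem_primeFactors hpn
    have hpos : 0 < n.factorization p :=
      hp'.factorization_pos_of_dvd hn0 (Nat.dvd_of_mem_primeFactors hpn)
    have := hfac p
    exact Nat.mem_primeFactors.mpr ⟨hp', Nat.dvd_of_factorization_pos (by omega), hm⟩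
  have hB : B ≤ Fm := Finset.sum_le_sum_of_subset hTsub
  have hP : P ≤ a.totient := by
    have h1 : P = (∏ p ∈ S, p ^ a.factorization p).totient :=
      (totient_prod_pow S (fun p hp => Nat.prime_of_mem_primeFactors (hSsub hp)) _).symm
    rw [h1]
    exact Nat.le_of_dvd (Nat.totient_pos.mpr (Nat.pos_of_ne_zero ha))
      (Nat.totient_dvd_of_dvd (prod_pow_factorization_dvd a S hSsub))
  have heS : ∀ p ∈ S, 1 ≤ a.factorization p := by
    intro p hp
    have := (Finset.mem_filter.mp hp).2
    omega
  have hemle : epsAux m ≤ 1 := by unfold epsAux; split <;> omega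
  have henle : epsAux n ≤ 1 := by unfold epsAux; split <;> omega
  unfold fAux
  rw [hsplit]
  by_cases hS1 : 2 ∈ S ∧ a.factorization 2 = 1
  · -- the factor φ(2^1) = 1 case
    obtain ⟨h2S, hv2a⟩ := hS1
    have hv2m : m.factorization 2 = 0 := by
      have := (Finset.mem_filter.mp h2S).2; omega
    have hem0 : epsAux m = 0 := by
      unfold epsAux; rw [if_neg]; rintro ⟨h1, -⟩; omega
    have ht2 : ((2 : ℕ) ^ a.factorization 2).totient = 1 := by
      rw [hv2a, pow_one, Nat.totient_two]
    have hAsplit : A = 1 + ∑ p ∈ S.erase 2, (p ^ a.factorization p).totient := by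
      rw [hAdef, ← Finset.add_sum_erase S _ h2S, ht2]
    have hPsplit : P = ∏ p ∈ S.erase 2, (p ^ a.factorization p).totient := by
      rw [hPdef, ← Finset.mul_prod_erase S _ h2S, ht2, one_mul]
    rcases (S.erase 2).eq_empty_or_nonempty with he | ⟨q, hq⟩
    · have hA1 : A = 1 := by rw [hAsplit, he]; simp
      omega
    · have h2le' : ∀ p ∈ S.erase 2, 2 ≤ (p ^ a.factorization p).totient := by
        intro p hp
        exact two_le_totient_prime_pow
          (Nat.prime_of_mem_primeFactors (hSsub (Finset.mem_of_mem_erase hp)))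
          (heS p (Finset.mem_of_mem_erase hp)) (Or.inl (Finset.ne_of_mem_erase hp))
      have hA : A ≤ P + 1 := by
        rw [hAsplit, hPsplit]
        have := sum_le_prod_of_two_le _ _ h2le' ⟨q, hq⟩
        omega
      have hen1 : epsAux n = 1 := by
        unfold epsAux
        rw [if_pos]
        constructor
        · have := hfac 2; omega
        · intro hn2
          have hq2 : q ≠ 2 := Finset.ne_of_mem_erase hq
          have hqS : q ∈ S := Finset.mem_of_mem_erase hq
          have hqn := (Finset.mem_filter.mp hqS).1
          have hqp := Nat.prime_of_mem_primeFactors hqn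
          have hqd : q ∣ n := Nat.dvd_of_mem_primeFactors hqn
          rw [hn2] at hqd
          exact hq2 ((Nat.prime_dvd_prime_iff_eq hqp Nat.prime_two).mp hqd)
      omega
  · -- all factors ≥ 2 on S
    have h2all : ∀ p ∈ S, 2 ≤ (p ^ a.factorization p).totient := by
      intro p hp
      refine two_le_totient_prime_pow (Nat.prime_of_mem_primeFactors (hSsub hp)) (heS p hp) ?_
      by_cases hp2 : p = 2
      · subst hp2
        right
        have : ¬ a.factorization 2 = 1 := fun h => hS1 ⟨hp, h⟩
        have := heS 2 hp
        omega
      · exact Or.inl hp2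
    rcases S.eq_empty_or_nonempty with he | hSne
    · have hA0 : A = 0 := by rw [hAdef, he]; simp
      omega
    · have hA : A ≤ a.totient := le_trans (sum_le_prod_of_two_le _ _ h2all hSne) hP
      by_cases hεm : m.factorization 2 = 1 ∧ m ≠ 2
      · have hem1 : epsAux m = 1 := by unfold epsAux; rw [if_pos hεm]
        have h2m : 2 ∈ m.primeFactors := Nat.mem_primeFactors.mpr
          ⟨Nat.prime_two, Nat.dvd_of_factorization_pos (by omega), hm⟩
        have hFm1 : 1 ≤ Fm := by
          calc 1 = ((2:ℕ) ^ m.factorization 2).totient := by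
                rw [hεm.1, pow_one, Nat.totient_two]
            _ ≤ Fm := by
                rw [hFmdef]
                exact Finset.single_le_sum (f := fun p => (p ^ m.factorization p).totient) (fun i _ => Nat.zero_le _) h2m
        by_cases hεn : n.factorization 2 = 1 ∧ n ≠ 2
        · have hen1 : epsAux n = 1 := by unfold epsAux; rw [if_pos hεn]
          omega
        · have hen0 : epsAux n = 0 := by unfold epsAux; rw [if_neg hεn]
          have hn2 : n ≠ 2 := by
            intro hn2
            have hmd : m ∣ n := Nat.dvd_lcm_right a m
            rw [hn2] at hmd
            rcases (Nat.dvd_prime Nat.prime_two).mp hmd with h1 | h2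
            · rw [h1] at hεm; simp [Nat.factorization_one] at hεm
            · exact hεm.2 h2
          have hv2n : n.factorization 2 ≠ 1 := fun h => hεn ⟨h, hn2⟩
          have hv2a : 2 ≤ a.factorization 2 := by have := hfac 2; omega
          have h2n : 2 ∈ n.primeFactors := Nat.mem_primeFactors.mpr
            ⟨Nat.prime_two, Nat.dvd_of_factorization_pos (by have := hfac 2; omega), hn0⟩
          have h2S : 2 ∈ S := Finset.mem_filter.mpr ⟨h2n, by omega⟩
          have h2T : 2 ∉ T := fun h => (Finset.mem_filter.mp h).2 (by omega)
          have hBm : B + 1 ≤ Fm := by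
            have hsub : insert 2 T ⊆ m.primeFactors := Finset.insert_subset h2m hTsub
            calc B + 1 = ∑ p ∈ insert 2 T, (p ^ m.factorization p).totient := by
                  rw [Finset.sum_insert h2T, hεm.1, pow_one, Nat.totient_two]; omega
              _ ≤ Fm := Finset.sum_le_sum_of_subset hsub
          omega
      · have hem0 : epsAux m = 0 := by unfold epsAux; rw [if_neg hεm]
        omega

lemma foldr_lcm_ne_zero (l : List ℕ) (h : ∀ x ∈ l, x ≠ 0) : l.foldr Nat.lcm 1 ≠ 0 := by
  induction l with
  | nil => simp
  | cons a l ih =>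
    simp only [List.foldr_cons]
    exact Nat.lcm_ne_zero (h a (by simp)) (ih fun x hx => h x (by simp [hx]))

/-- If `d₁, …, d_r` is a nonempty list of integers, each `≥ 2`, whose least common
multiple is `n ≥ 2`, then `Σ_i φ(d_i) ≥ f(n)`. -/
theorem sum_totient_ge_f_of_lcm (n : ℕ) (hn : 2 ≤ n) (l : List ℕ) (hl : l ≠ [])
    (hl2 : ∀ x ∈ l, 2 ≤ x) (hlcm : l.foldr Nat.lcm 1 = n) :
    fAux n ≤ (l.map Nat.totient).sum := by
  subst hlcm
  clear hn hl
  induction l with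
  | nil => simp [fAux, epsAux]
  | cons a l ih =>
    have h0 : ∀ x ∈ l, (2:ℕ) ≤ x := fun x hx => hl2 x (by simp [hx])
    have ha : a ≠ 0 := by have := hl2 a (by simp); omega
    have hf : l.foldr Nat.lcm 1 ≠ 0 := foldr_lcm_ne_zero l (fun x hx => by have := h0 x hx; omega)
    simp only [List.foldr_cons, List.map_cons, List.sum_cons]
    calc fAux (Nat.lcm a (l.foldr Nat.lcm 1)) ≤ a.totient + fAux (l.foldr Nat.lcm 1) :=
          fAux_lcm_le _ _ ha hf
      _ ≤ a.totient + (l.map Nat.totient).sum := Nat.add_le_add_left (ih h0) _
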